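/- For every even L ∈ ℕ and every a > 0 such that e^{a r^L L}(1 − r^L) < 1, one has E_W[exp(a · r^L · τ_1^{(L)})] ≤ r^L · e^{2 a r^L L} / (1 − e^{a r^L L}(1 − r^L)). -/

import Mathlib

open MeasureTheory ProbabilityTheory

/-- The alternating pattern `(+, −, +, −, …)`: `0` codes `+`, `1` codes `−`, `2` codes `0`. -/
def altPat (j : ℕ) : Fin 3 := if j % 2 = 0 then 0 else 1

/-- The first regeneration time `τ₁^{(L)}`:
the first `n > L` such that `(ε_{n−L}, …, ε_{n−1})` equals the alternating word of length `L`. -/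
noncomputable def tau1 (L : ℕ) (ε : ℕ → Fin 3) : ℕ :=
  sInf {n : ℕ | L < n ∧ ∀ j < L, ε (n - L + j) = altPat j}


/-- the explicit geometric-sum bound on the exponential moment of `τ₁^{(L)}`. -/
theorem exp_moment_geometric_bound
    (p : ℝ) (hp : 1 / 2 < p) (hp1 : p < 1)
    (r : ℝ) (hr : r = (1 - p) / 2)
    (w : Measure (Fin 3)) (hwprob : IsProbabilityMeasure w)
    (hw0 : w {0} = ENNReal.ofReal r) (hw1 : w {1} = ENNReal.ofReal r)
    (hw2 : w {2} = ENNReal.ofReal p)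
    (W : Measure (ℕ → Fin 3)) (hWprob : IsProbabilityMeasure W)
    (hiid : iIndepFun (fun (i : ℕ) (ε : ℕ → Fin 3) => ε i) W)
    (hmarg : ∀ i : ℕ, W.map (fun ε => ε i) = w)
    (L : ℕ) (hL : Even L) (hL0 : 0 < L)
    (a : ℝ) (ha : 0 < a)
    (hcond : Real.exp (a * r ^ L * L) * (1 - r ^ L) < 1) :
    ∫⁻ ε, ENNReal.ofReal (Real.exp (a * (r ^ L * (tau1 L ε : ℝ)))) ∂W
      ≤ ENNReal.ofReal
          (r ^ L * Real.exp (2 * a * r ^ L * L)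
            / (1 - Real.exp (a * r ^ L * L) * (1 - r ^ L))) := by
  classical
  have hr0 : 0 < r := by rw [hr]; linarith
  have hr1 : r < 1 := by rw [hr]; linarith
  set ρ : ℝ := r ^ L with hρ
  have hρ0 : 0 < ρ := pow_pos hr0 L
  have hρ1 : ρ ≤ 1 := pow_le_one₀ hr0.le hr1.le
  set x : ℝ := Real.exp (a * ρ * L) * (1 - ρ) with hx
  have hx0 : 0 ≤ x := mul_nonneg (Real.exp_nonneg _) (by linarith)
  have h1x : 0 < 1 - x := by linarith
  -- block events
  set B : ℕ → Set (ℕ → Fin 3) :=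
    fun k => ⋂ j ∈ Finset.range L, {ε : ℕ → Fin 3 | ε ((k + 1) * L + j) = altPat j} with hB
  have hBmeas : ∀ k, MeasurableSet (B k) := by
    intro k
    apply MeasurableSet.iInter; intro j
    apply MeasurableSet.iInter; intro _
    show MeasurableSet ((fun ε : ℕ → Fin 3 => ε ((k + 1) * L + j)) ⁻¹' {altPat j})
    exact (measurable_pi_apply _) (measurableSet_singleton _)
  -- single-coordinate measure
  have hD : ∀ i : ℕ,
      W ((fun ε : ℕ → Fin 3 => ε i) ⁻¹' {altPat (i % L)}) = ENNReal.ofReal r := by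
    intro i
    have hmeas : Measurable (fun ε : ℕ → Fin 3 => ε i) := measurable_pi_apply i
    have hmap : W ((fun ε : ℕ → Fin 3 => ε i) ⁻¹' {altPat (i % L)})
        = (W.map (fun ε => ε i)) {altPat (i % L)} := by
      rw [Measure.map_apply hmeas (measurableSet_singleton _)]
    rw [hmap, hmarg]
    rcases Nat.mod_two_eq_zero_or_one (i % L) with h | h
    · simp only [altPat, h, if_pos rfl]; exact hw0
    · simp only [altPat, h]; norm_num; exact hw1
  have hmod : ∀ k j : ℕ, j < L → ((k + 1) * L + j) % L = j := by
    intro k j hj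
    have h : (k + 1) * L = L * (k + 1) := mul_comm _ _
    rw [h, Nat.mul_add_mod, Nat.mod_eq_of_lt hj]
  -- measure of intersections of block events
  have hW : ∀ s : Finset ℕ, W (⋂ k ∈ s, B k) = ENNReal.ofReal r ^ (s.card * L) := by
    intro s
    set T : Finset ℕ := s.biUnion (fun k => (Finset.range L).image (fun j => (k + 1) * L + j))
      with hT
    have hset : (⋂ k ∈ s, B k)
        = ⋂ i ∈ T, ((fun ε : ℕ → Fin 3 => ε i) ⁻¹' {altPat (i % L)}) := by
      ext ε
      simp only [Set.mem_iInter, hB, hT, Finset.mem_biUnion, Finset.mem_image,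
        Finset.mem_range, Set.mem_preimage, Set.mem_singleton_iff, Set.mem_setOf_eq]
      constructor
      · rintro h i ⟨k, hk, j, hj, rfl⟩
        rw [hmod k j hj]; exact h k hk j hj
      · intro h k hk j hj
        have := h ((k + 1) * L + j) ⟨k, hk, j, hj, rfl⟩
        rwa [hmod k j hj] at this
    rw [hset,
      hiid.meas_biInter (fun i _ => ⟨{altPat (i % L)}, measurableSet_singleton _, rfl⟩)]
    have hdiv : ∀ k j : ℕ, j < L → ((k + 1) * L + j) / L = k + 1 := by
      intro k j hj
      rw [mul_comm, Nat.mul_add_div hL0, Nat.div_eq_of_lt hj, add_zero]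
    have hcard : T.card = s.card * L := by
      rw [hT, Finset.card_biUnion]
      · have : ∀ k ∈ s, ((Finset.range L).image (fun j => (k + 1) * L + j)).card = L := by
          intro k _
          rw [Finset.card_image_of_injective _ (fun j j' h => by omega), Finset.card_range]
        rw [Finset.sum_congr rfl this, Finset.sum_const, smul_eq_mul]
      · intro k hk k' hk' hkk'
        rw [Function.onFun, Finset.disjoint_left]
        rintro i hi hi'
        simp only [Finset.mem_image, Finset.mem_range] at hi hi'
        obtain ⟨j, hj, rfl⟩ := hi
        obtain ⟨j', hj', he⟩ := hi'
        apply hkk'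
        have h1 := hdiv k j hj
        have h2 := hdiv k' j' hj'
        rw [he] at h2
        omega
    rw [Finset.prod_congr rfl (fun i _ => hD i), Finset.prod_const, hcard]
  have hBk : ∀ k, W (B k) = ENNReal.ofReal ρ := by
    intro k
    have h := hW {k}
    rw [Finset.set_biInter_singleton, Finset.card_singleton, one_mul] at h
    rw [h, hρ, ENNReal.ofReal_pow hr0.le]
  have hprodB : ∀ s : Finset ℕ, W (⋂ k ∈ s, B k) = ∏ k ∈ s, W (B k) := by
    intro s
    rw [hW s, Finset.prod_congr rfl (fun k _ => hBk k), Finset.prod_const,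
      hρ, ENNReal.ofReal_pow hr0.le, mul_comm, pow_mul]
  have hBindep : iIndep (fun i => MeasurableSpace.generateFrom {B i}) W :=
    (iIndepSet_iff_iIndep B W).1 ((iIndepSet_iff_meas_biInter hBmeas).2 hprodB)
  -- first-success events
  set E : ℕ → Set (ℕ → Fin 3) :=
    fun n => ⋂ i ∈ Finset.range (n + 1), (if i = n then B n else (B i)ᶜ) with hE
  have hEmeas : ∀ n, MeasurableSet (E n) := by
    intro n
    apply MeasurableSet.iInter; intro i
    apply MeasurableSet.iInter; intro _
    by_cases h : i = n
    · simp only [if_pos h]; exact hBmeas n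
    · simp only [if_neg h]; exact (hBmeas i).compl
  have hEsub1 : ∀ n, E n ⊆ B n := by
    intro n ε hε
    have := Set.mem_iInter₂.1 hε n (Finset.self_mem_range_succ n)
    simpa using this
  have hEsub2 : ∀ i n, i < n → E n ⊆ (B i)ᶜ := by
    intro i n h ε hε
    have := Set.mem_iInter₂.1 hε i (Finset.mem_range.2 (Nat.lt_succ_of_lt h))
    simpa [Nat.ne_of_lt h] using this
  have hEmeasure : ∀ n, W (E n) = ENNReal.ofReal ρ * ENNReal.ofReal (1 - ρ) ^ n := by
    intro n
    have hmeas' : ∀ i ∈ Finset.range (n + 1),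
        MeasurableSet[MeasurableSpace.generateFrom {B i}] (if i = n then B n else (B i)ᶜ) := by
      intro i _
      by_cases h : i = n
      · subst h; simp only [if_pos rfl]
        exact MeasurableSpace.measurableSet_generateFrom (Set.mem_singleton _)
      · simp only [if_neg h]
        exact (MeasurableSpace.measurableSet_generateFrom (Set.mem_singleton _)).compl
    have h := hBindep.meas_biInter (S := Finset.range (n + 1))
      (s := fun i => if i = n then B n else (B i)ᶜ) hmeas'
    have hLHS : E n = ⋂ i ∈ Finset.range (n + 1), (if i = n then B n else (B i)ᶜ) := rfl
    rw [hLHS, h, Finset.range_add_one, Finset.prod_insert Finset.notMem_range_self]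
    beta_reduce
    rw [if_pos rfl, hBk n]
    have h2 : ∀ i ∈ Finset.range n,
        W (if i = n then B n else (B i)ᶜ) = ENNReal.ofReal (1 - ρ) := by
      intro i hi
      have hin : i ≠ n := Nat.ne_of_lt (Finset.mem_range.1 hi)
      rw [if_neg hin, prob_compl_eq_one_sub (hBmeas i), hBk i,
        ← ENNReal.ofReal_one, ← ENNReal.ofReal_sub _ hρ0.le]
    rw [Finset.prod_congr rfl h2, Finset.prod_const, Finset.card_range, mul_comm]
  have hdisj : Pairwise (Function.onFun Disjoint E) := by
    have key : ∀ n m, n < m → Disjoint (E n) (E m) := by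
      intro n m hnm
      rw [Set.disjoint_left]
      intro ε hεn hεm
      exact hEsub2 n m hnm hεm (hEsub1 n hεn)
    intro n m hnm
    rcases lt_or_gt_of_ne hnm with h | h
    · exact key n m h
    · exact (key m n h).symm
  have hofρ : (1 : ENNReal) - ENNReal.ofReal (1 - ρ) = ENNReal.ofReal ρ := by
    rw [← ENNReal.ofReal_one, ← ENNReal.ofReal_sub _ (by linarith : (0:ℝ) ≤ 1 - ρ),
      sub_sub_cancel]
  have hUnion : W (⋃ n, E n) = 1 := by
    rw [measure_iUnion hdisj hEmeas]
    simp_rw [hEmeasure]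
    rw [ENNReal.tsum_mul_left, ENNReal.tsum_geometric, hofρ,
      ENNReal.mul_inv_cancel (ENNReal.ofReal_pos.2 hρ0).ne' ENNReal.ofReal_ne_top]
  have hcompl : W ((⋃ n, E n)ᶜ) = 0 := by
    rw [prob_compl_eq_one_sub (MeasurableSet.iUnion hEmeas), hUnion, tsub_self]
  -- bound on tau1 on E n
  have htau : ∀ n (ε : ℕ → Fin 3), ε ∈ E n → tau1 L ε ≤ (n + 2) * L := by
    intro n ε hε
    apply Nat.sInf_le
    constructor
    · have h2 : 2 * L ≤ (n + 2) * L := Nat.mul_le_mul_right L (by omega)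
      have h3 : L < 2 * L := by omega
      exact lt_of_lt_of_le h3 h2
    · intro j hj
      have h1 : (n + 2) * L - L = (n + 1) * L := by
        have h : (n + 2) * L = (n + 1) * L + L := by ring
        rw [h, Nat.add_sub_cancel]
      rw [h1]
      have hBn := hEsub1 n hε
      have := Set.mem_iInter₂.1 hBn j (Finset.mem_range.2 hj)
      exact this
  -- pointwise a.e. bound
  have hpt : ∀ ε ∈ ⋃ n, E n,
      ENNReal.ofReal (Real.exp (a * (ρ * (tau1 L ε : ℝ))))
        ≤ ∑' n, (E n).indicator
            (fun _ => ENNReal.ofReal (Real.exp (a * ρ * (((n + 2) * L : ℕ) : ℝ)))) ε := by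
    intro ε hε
    obtain ⟨n, hn⟩ := Set.mem_iUnion.1 hε
    refine le_trans ?_ (ENNReal.le_tsum n)
    rw [Set.indicator_of_mem hn]
    apply ENNReal.ofReal_le_ofReal
    apply Real.exp_le_exp.2
    have h1 : (tau1 L ε : ℝ) ≤ (((n + 2) * L : ℕ) : ℝ) := Nat.cast_le.2 (htau n ε hn)
    have h2 : 0 ≤ a * ρ := le_of_lt (mul_pos ha hρ0)
    calc a * (ρ * (tau1 L ε : ℝ)) = a * ρ * (tau1 L ε : ℝ) := by ring
      _ ≤ a * ρ * (((n + 2) * L : ℕ) : ℝ) := mul_le_mul_of_nonneg_left h1 h2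
  have hae : ∀ᵐ ε ∂W,
      ENNReal.ofReal (Real.exp (a * (ρ * (tau1 L ε : ℝ))))
        ≤ ∑' n, (E n).indicator
            (fun _ => ENNReal.ofReal (Real.exp (a * ρ * (((n + 2) * L : ℕ) : ℝ)))) ε :=
    Filter.eventually_of_mem (mem_ae_iff.2 hcompl) hpt
  -- the real-number identity for each term
  have hreal : ∀ n : ℕ,
      Real.exp (a * ρ * (((n + 2) * L : ℕ) : ℝ)) * (ρ * (1 - ρ) ^ n)
        = ρ * Real.exp (2 * a * ρ * L) * x ^ n := by
    intro n
    have h1 : a * ρ * (((n + 2) * L : ℕ) : ℝ) = (n : ℝ) * (a * ρ * L) + 2 * a * ρ * L := by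
      push_cast; ring
    rw [hx, h1, Real.exp_add, Real.exp_nat_mul, mul_pow]
    ring
  calc
    ∫⁻ ε, ENNReal.ofReal (Real.exp (a * (ρ * (tau1 L ε : ℝ)))) ∂W
        ≤ ∫⁻ ε, ∑' n, (E n).indicator
            (fun _ => ENNReal.ofReal (Real.exp (a * ρ * (((n + 2) * L : ℕ) : ℝ)))) ε ∂W :=
      lintegral_mono_ae hae
    _ = ∑' n, ENNReal.ofReal (Real.exp (a * ρ * (((n + 2) * L : ℕ) : ℝ))) * W (E n) := by
      rw [lintegral_tsum (fun n => (measurable_const.indicator (hEmeas n)).aemeasurable)]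
      exact tsum_congr fun n => lintegral_indicator_const (hEmeas n) _
    _ = ∑' n, ENNReal.ofReal (ρ * Real.exp (2 * a * ρ * L) * x ^ n) := by
      refine tsum_congr fun n => ?_
      rw [hEmeasure n, ← ENNReal.ofReal_pow (by linarith : (0:ℝ) ≤ 1 - ρ),
        ← ENNReal.ofReal_mul hρ0.le, ← ENNReal.ofReal_mul (Real.exp_nonneg _), hreal n]
    _ = ENNReal.ofReal (ρ * Real.exp (2 * a * ρ * L)) * ∑' n, ENNReal.ofReal x ^ n := by
      rw [← ENNReal.tsum_mul_left]
      refine tsum_congr fun n => ?_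
      rw [← ENNReal.ofReal_pow hx0, ← ENNReal.ofReal_mul (by positivity)]
    _ = ENNReal.ofReal (ρ * Real.exp (2 * a * ρ * L)) * (ENNReal.ofReal (1 - x))⁻¹ := by
      rw [ENNReal.tsum_geometric, ← ENNReal.ofReal_one,
        ← ENNReal.ofReal_sub _ hx0]
    _ = ENNReal.ofReal (ρ * Real.exp (2 * a * ρ * L) / (1 - x)) := by
      rw [ENNReal.ofReal_div_of_pos h1x, div_eq_mul_inv]
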